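/- arXiv:math/0504603 — 2 statements merged into one kernel-verified Lean document; each statement's English description precedes it below -/
import Mathlib

section
/- If ν is a finite Borel measure on [0,∞) and f(t) = ∫₀^∞ exp(−t²s/2) dν(s), then for every n ≥ 1 the function x ↦ f(‖x‖) on ℝⁿ is positive semi-definite. -/
open MeasureTheory Complex Finset

/-- `g` is positive semi-definite on `ℝⁿ` (as `EuclideanSpace ℝ (Fin n)`). -/
def IsPosSemidef (n : ℕ) (g : EuclideanSpace ℝ (Fin n) → ℂ) : Prop :=
  ∀ (k : ℕ) (x : Fin k → EuclideanSpace ℝ (Fin n)) (c : Fin k → ℂ),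
    0 ≤ (∑ i, ∑ j, g (x i - x j) * c i * (starRingEnd ℂ) (c j)).re ∧
      (∑ i, ∑ j, g (x i - x j) * c i * (starRingEnd ℂ) (c j)).im = 0

lemma powKernel {n k : ℕ} (x : Fin k → EuclideanSpace ℝ (Fin n)) (b : Fin k → ℂ) (m : ℕ) :
    ∃ r : ℝ, 0 ≤ r ∧
      (∑ i, ∑ j, ((inner ℝ (x i) (x j) : ℝ) : ℂ) ^ m * b i * (starRingEnd ℂ) (b j)) = (r : ℂ) := by
  classical
  set P : Fin k → (Fin m → Fin n) → ℂ := fun i a => ∏ t, ((x i (a t) : ℝ) : ℂ) with hP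
  set w : (Fin m → Fin n) → ℂ := fun a => ∑ i, b i * P i a with hw
  have hin : ∀ i j, ((inner ℝ (x i) (x j) : ℝ) : ℂ) = ∑ p, ((x i p : ℝ) : ℂ) * ((x j p : ℝ) : ℂ) := by
    intro i j
    rw [PiLp.inner_apply]
    push_cast
    simp [RCLike.inner_apply, mul_comm]
  have hpow : ∀ i j, ((inner ℝ (x i) (x j) : ℝ) : ℂ) ^ m = ∑ a : Fin m → Fin n, P i a * P j a := by
    intro i j
    rw [hin]
    calc (∑ p, ((x i p : ℝ) : ℂ) * ((x j p : ℝ) : ℂ)) ^ m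
        = ∏ _t : Fin m, (∑ p, ((x i p : ℝ) : ℂ) * ((x j p : ℝ) : ℂ)) := by
          simp
      _ = ∑ a ∈ Fintype.piFinset (fun _ : Fin m => (univ : Finset (Fin n))),
            ∏ t, ((x i (a t) : ℝ) : ℂ) * ((x j (a t) : ℝ) : ℂ) := Finset.prod_univ_sum _ _
      _ = ∑ a : Fin m → Fin n, P i a * P j a := by
          rw [Fintype.piFinset_univ]
          exact Finset.sum_congr rfl fun a _ => by rw [Finset.prod_mul_distrib]
  have hPconj : ∀ i a, (starRingEnd ℂ) (P i a) = P i a := by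
    intro i a
    simp [hP, ← Complex.ofReal_prod]
  refine ⟨∑ a : Fin m → Fin n, Complex.normSq (w a), Finset.sum_nonneg fun a _ => Complex.normSq_nonneg _, ?_⟩
  have key : ∀ i j, ((inner ℝ (x i) (x j) : ℝ) : ℂ) ^ m * b i * (starRingEnd ℂ) (b j)
      = ∑ a : Fin m → Fin n, (b i * P i a) * ((starRingEnd ℂ) (b j) * P j a) := by
    intro i j
    rw [hpow, Finset.sum_mul, Finset.sum_mul]
    exact Finset.sum_congr rfl fun a _ => by ring
  simp_rw [key]
  have haterm : ∀ a : Fin m → Fin n,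
      ∑ i, ∑ j, b i * P i a * ((starRingEnd ℂ) (b j) * P j a) = (Complex.normSq (w a) : ℂ) := by
    intro a
    rw [← Finset.sum_mul_sum]
    have hconj : ∑ j, (starRingEnd ℂ) (b j) * P j a = (starRingEnd ℂ) (w a) := by
      rw [hw]
      simp only [map_sum, map_mul, hPconj]
    rw [hconj, Complex.mul_conj]
  calc ∑ i, ∑ j, ∑ a : Fin m → Fin n, b i * P i a * ((starRingEnd ℂ) (b j) * P j a)
      = ∑ i, ∑ a : Fin m → Fin n, ∑ j, b i * P i a * ((starRingEnd ℂ) (b j) * P j a) :=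
        Finset.sum_congr rfl fun i _ => Finset.sum_comm
    _ = ∑ a : Fin m → Fin n, ∑ i, ∑ j, b i * P i a * ((starRingEnd ℂ) (b j) * P j a) :=
        Finset.sum_comm
    _ = ∑ a : Fin m → Fin n, (Complex.normSq (w a) : ℂ) :=
        Finset.sum_congr rfl fun a _ => haterm a
    _ = ((∑ a : Fin m → Fin n, Complex.normSq (w a) : ℝ) : ℂ) := by
        rw [Complex.ofReal_sum]

lemma expKernel {n k : ℕ} (x : Fin k → EuclideanSpace ℝ (Fin n)) (c : Fin k → ℂ) {s : ℝ}
    (hs : 0 ≤ s) :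
    ∃ r : ℝ, 0 ≤ r ∧
      (∑ i, ∑ j, ((Real.exp (-‖x i - x j‖ ^ 2 * s / 2) : ℝ) : ℂ) * c i * (starRingEnd ℂ) (c j))
        = (r : ℂ) := by
  classical
  set b : Fin k → ℂ := fun i => c i * (Real.exp (-‖x i‖ ^ 2 * s / 2) : ℝ) with hb
  set B : Fin k → Fin k → ℝ := fun i j => s * (inner ℝ (x i) (x j) : ℝ) with hB
  have hsplit : ∀ i j, ((Real.exp (-‖x i - x j‖ ^ 2 * s / 2) : ℝ) : ℂ) * c i * (starRingEnd ℂ) (c j)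
      = Complex.exp ((B i j : ℝ) : ℂ) * b i * (starRingEnd ℂ) (b j) := by
    intro i j
    have hnorm : ‖x i - x j‖ ^ 2 = ‖x i‖ ^ 2 - 2 * (inner ℝ (x i) (x j) : ℝ) + ‖x j‖ ^ 2 :=
      norm_sub_sq_real _ _
    have h1 : (-‖x i - x j‖ ^ 2 * s / 2 : ℝ)
        = (-‖x i‖ ^ 2 * s / 2) + B i j + (-‖x j‖ ^ 2 * s / 2) := by
      rw [hB, hnorm]; ring
    rw [h1, Real.exp_add, Real.exp_add]
    simp only [hb, Complex.ofReal_mul, map_mul, Complex.conj_ofReal, ← Complex.ofReal_exp]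
    ring
  simp_rw [hsplit]
  -- expand exp as a power series
  have hexp : ∀ z : ℝ, Complex.exp ((z : ℝ) : ℂ) = ∑' m : ℕ, ((z : ℝ) : ℂ) ^ m / m.factorial := by
    intro z
    rw [Complex.exp_eq_exp_ℂ, NormedSpace.exp_eq_tsum_div]
  have hpk := fun m : ℕ => powKernel x b m
  choose r hr0 hr using hpk
  -- the summand per pair (i,j)
  have hterm : ∀ (i j : Fin k),
      Complex.exp ((B i j : ℝ) : ℂ) * b i * (starRingEnd ℂ) (b j)
        = ∑' m : ℕ, ((B i j : ℝ) : ℂ) ^ m / m.factorial * (b i * (starRingEnd ℂ) (b j)) := by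
    intro i j
    rw [hexp, tsum_mul_right, mul_assoc]
  simp_rw [hterm]
  have hsummable : ∀ (i j : Fin k),
      Summable (fun m : ℕ => ((B i j : ℝ) : ℂ) ^ m / m.factorial * (b i * (starRingEnd ℂ) (b j))) :=
    fun i j => (NormedSpace.expSeries_div_summable (((B i j : ℝ) : ℂ))).mul_right _
  set ρ : ℕ → ℝ := fun m => s ^ m / m.factorial * r m with hρ
  have hρ0 : ∀ m, 0 ≤ ρ m := fun m =>
    mul_nonneg (div_nonneg (pow_nonneg hs m) (Nat.cast_nonneg _)) (hr0 m)
  have hmterm : ∀ m : ℕ,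
      (∑ i, ∑ j, ((B i j : ℝ) : ℂ) ^ m / m.factorial * (b i * (starRingEnd ℂ) (b j)))
        = ((ρ m : ℝ) : ℂ) := by
    intro m
    have h2 : ∀ i j : Fin k,
        ((B i j : ℝ) : ℂ) ^ m / m.factorial * (b i * (starRingEnd ℂ) (b j))
          = ((s : ℂ) ^ m / m.factorial) *
            (((inner ℝ (x i) (x j) : ℝ) : ℂ) ^ m * b i * (starRingEnd ℂ) (b j)) := by
      intro i j
      simp only [hB, Complex.ofReal_mul, mul_pow]
      ring
    simp_rw [h2, ← Finset.mul_sum]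
    rw [hr m, hρ]
    push_cast
    ring
  refine ⟨∑' m, ρ m, tsum_nonneg hρ0, ?_⟩
  calc ∑ i, ∑ j, ∑' m : ℕ, ((B i j : ℝ) : ℂ) ^ m / m.factorial * (b i * (starRingEnd ℂ) (b j))
      = ∑ i, ∑' m : ℕ, ∑ j, ((B i j : ℝ) : ℂ) ^ m / m.factorial * (b i * (starRingEnd ℂ) (b j)) :=
        Finset.sum_congr rfl fun i _ => (Summable.tsum_finsetSum fun j _ => hsummable i j).symm
    _ = ∑' m : ℕ, ∑ i, ∑ j, ((B i j : ℝ) : ℂ) ^ m / m.factorial * (b i * (starRingEnd ℂ) (b j)) :=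
        (Summable.tsum_finsetSum fun i _ => summable_sum (fun j (_ : j ∈ Finset.univ) => hsummable i j)).symm
    _ = ∑' m : ℕ, ((ρ m : ℝ) : ℂ) := tsum_congr hmterm
    _ = ((∑' m, ρ m : ℝ) : ℂ) := (Complex.ofReal_tsum ρ).symm

theorem stmt0 (ν : Measure ℝ) [IsFiniteMeasure ν] (hν : ν (Set.Iio 0) = 0)
    (f : ℝ → ℝ) (hf : ∀ t, f t = ∫ s, Real.exp (-t ^ 2 * s / 2) ∂ν)
    (n : ℕ) (hn : 1 ≤ n) :
    IsPosSemidef n (fun x => (f ‖x‖ : ℂ)) := by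
  intro k x c
  have hae : ∀ᵐ s ∂ν, 0 ≤ s := by
    rw [ae_iff]
    simp only [not_le]
    exact hν
  have hint : ∀ t : ℝ, Integrable (fun s => Real.exp (-t ^ 2 * s / 2)) ν := by
    intro t
    refine Integrable.mono' (integrable_const 1) ?_ ?_
    · exact (Real.continuous_exp.comp (by fun_prop)).aestronglyMeasurable
    · filter_upwards [hae] with s hs
      rw [Real.norm_eq_abs, abs_of_pos (Real.exp_pos _), Real.exp_le_one_iff]
      have h2 : 0 ≤ t ^ 2 * s / 2 := by positivity
      linarith
  have hintc : ∀ (i j : Fin k), Integrable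
      (fun s => ((Real.exp (-‖x i - x j‖ ^ 2 * s / 2) : ℝ) : ℂ) * c i * (starRingEnd ℂ) (c j)) ν :=
    fun i j => (((hint _).ofReal).mul_const _).mul_const _
  set F : ℝ → ℂ := fun s =>
    ∑ i, ∑ j, ((Real.exp (-‖x i - x j‖ ^ 2 * s / 2) : ℝ) : ℂ) * c i * (starRingEnd ℂ) (c j)
    with hF
  have hFint : Integrable F ν :=
    integrable_finset_sum _ fun i _ => integrable_finset_sum _ fun j _ => hintc i j
  have key : (∑ i, ∑ j, ((f ‖x i - x j‖ : ℝ) : ℂ) * c i * (starRingEnd ℂ) (c j))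
      = ∫ s, F s ∂ν := by
    have hfc : ∀ i j : Fin k, ((f ‖x i - x j‖ : ℝ) : ℂ) * c i * (starRingEnd ℂ) (c j)
        = ∫ s, ((Real.exp (-‖x i - x j‖ ^ 2 * s / 2) : ℝ) : ℂ) * c i * (starRingEnd ℂ) (c j) ∂ν := by
      intro i j
      rw [hf]
      conv_rhs => rw [integral_mul_const, integral_mul_const]
      congr 1
      congr 1
      exact (integral_ofReal (𝕜 := ℂ)).symm
    simp_rw [hfc]
    rw [hF]
    calc ∑ i, ∑ j, ∫ s, ((Real.exp (-‖x i - x j‖ ^ 2 * s / 2) : ℝ) : ℂ) * c i * (starRingEnd ℂ) (c j) ∂ν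
        = ∑ i, ∫ s, ∑ j, ((Real.exp (-‖x i - x j‖ ^ 2 * s / 2) : ℝ) : ℂ) * c i * (starRingEnd ℂ) (c j) ∂ν :=
          Finset.sum_congr rfl fun i _ => (integral_finset_sum _ fun j _ => hintc i j).symm
      _ = ∫ s, ∑ i, ∑ j, ((Real.exp (-‖x i - x j‖ ^ 2 * s / 2) : ℝ) : ℂ) * c i * (starRingEnd ℂ) (c j) ∂ν :=
          (integral_finset_sum _ fun i _ =>
            integrable_finset_sum _ fun j _ => hintc i j).symm
  have hptwise : ∀ᵐ s ∂ν, 0 ≤ (F s).re ∧ (F s).im = 0 := by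
    filter_upwards [hae] with s hs
    obtain ⟨r, hr0, hr⟩ := expKernel x c hs
    rw [hF]
    simp only
    rw [hr]
    simp [hr0]
  simp only at key ⊢
  rw [key]
  constructor
  · have := integral_re (μ := ν) hFint
    simp only [RCLike.re_to_complex] at this
    rw [← this]
    refine integral_nonneg_of_ae ?_
    filter_upwards [hptwise] with s hs using hs.1
  · have := integral_im (μ := ν) hFint
    simp only [RCLike.im_to_complex] at this
    rw [← this]
    rw [integral_eq_zero_of_ae ?_]
    filter_upwards [hptwise] with s hs using hs.2
end

section
/- Let {Yᵢ}_{i≥1} be an exchangeable sequence of real random variables with E[Y₁²] possibly infinite. If the Yᵢ are conditionally i.i.d. given a σ-algebra 𝓔, then L := lim_{n→∞} (1/n) ∑_{i=1}^n Yᵢ² exists almost surely in [0,∞], and {L < ∞} agrees up to null sets with {E[Y₁² | 𝓔] < ∞}. -/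
open MeasureTheory ProbabilityTheory Filter Finset

lemma sup_min_nat (x : ENNReal) : ⨆ M : ℕ, min x (M : ENNReal) = x := by
  rcases eq_or_ne x ⊤ with rfl | hx
  · simp [ENNReal.iSup_natCast]
  · apply le_antisymm (iSup_le fun M => min_le_left _ _)
    obtain ⟨M, hM⟩ := ENNReal.exists_nat_gt hx
    exact le_trans (le_of_eq (min_eq_left hM.le).symm) (le_iSup (fun M : ℕ => min x (M:ENNReal)) M)

lemma ofReal_min (a b : ℝ) : ENNReal.ofReal (min a b) = min (ENNReal.ofReal a) (ENNReal.ofReal b) := by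
  rcases le_total a b with h | h
  · rw [min_eq_left h, min_eq_left (ENNReal.ofReal_le_ofReal h)]
  · rw [min_eq_right h, min_eq_right (ENNReal.ofReal_le_ofReal h)]

/-- Strong law of large numbers for nonnegative i.i.d. random variables, with possibly infinite
mean, stated with values in `ℝ≥0∞`. -/
lemma slln_ennreal {α : Type*} [MeasurableSpace α] (μ : Measure α) [IsProbabilityMeasure μ]
    (X : ℕ → α → ℝ) (hm : ∀ i, Measurable (X i)) (hnn : ∀ i a, 0 ≤ X i a)
    (hindep : ∀ i j, i ≠ j → IndepFun (X i) (X j) μ)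
    (hident : ∀ i, IdentDistrib (X i) (X 0) μ μ) :
    ∀ᵐ a ∂μ, Tendsto (fun n => (∑ i ∈ Finset.range n, ENNReal.ofReal (X i a)) / (n : ENNReal))
      atTop (nhds (∫⁻ a, ENNReal.ofReal (X 0 a) ∂μ)) := by
  rcases eq_or_ne (∫⁻ a, ENNReal.ofReal (X 0 a) ∂μ) ⊤ with hI | hI
  · -- infinite mean case
    have hMint : ∀ M : ℕ, Integrable (fun a => min (X 0 a) (M:ℝ)) μ := by
      intro M
      refine Integrable.mono' (integrable_const (M:ℝ)) ((hm 0).min measurable_const).aestronglyMeasurable ?_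
      refine Eventually.of_forall fun a => ?_
      rw [Real.norm_of_nonneg (le_min (hnn 0 a) (Nat.cast_nonneg M))]
      exact min_le_right _ _
    have hSLLN : ∀ M : ℕ, ∀ᵐ a ∂μ, Tendsto
        (fun n : ℕ => (∑ i ∈ Finset.range n, min (X i a) (M:ℝ)) / n) atTop
        (nhds (μ[fun a => min (X 0 a) (M:ℝ)])) := by
      intro M
      refine strong_law_ae_real _ (hMint M) (fun i j hij => ?_) (fun i => ?_)
      · exact (hindep i j hij).comp (measurable_id.min measurable_const)
          (measurable_id.min measurable_const)
      · exact (hident i).comp (measurable_id.min measurable_const)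
    rw [← ae_all_iff] at hSLLN
    filter_upwards [hSLLN] with a ha
    have key : ∀ M : ℕ, ENNReal.ofReal (μ[fun a => min (X 0 a) (M:ℝ)]) ≤
        atTop.liminf (fun n : ℕ => (∑ i ∈ Finset.range n, ENNReal.ofReal (X i a)) / (n : ENNReal)) := by
      intro M
      have h1 : Tendsto (fun n : ℕ => ENNReal.ofReal ((∑ i ∈ Finset.range n, min (X i a) (M:ℝ)) / n))
          atTop (nhds (ENNReal.ofReal (μ[fun a => min (X 0 a) (M:ℝ)]))) :=
        (ENNReal.continuous_ofReal.tendsto _).comp (ha M)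
      rw [← h1.liminf_eq]
      refine liminf_le_liminf ?_
      filter_upwards [eventually_ge_atTop 1] with n hn
      rw [ENNReal.ofReal_div_of_pos (by exact_mod_cast hn), ENNReal.ofReal_natCast,
        ENNReal.ofReal_sum_of_nonneg (fun i _ => le_min (hnn i a) (Nat.cast_nonneg M))]
      refine ENNReal.div_le_div_right (Finset.sum_le_sum fun i _ => ?_) _
      exact ENNReal.ofReal_le_ofReal (min_le_left _ _)
    have hsup : (∫⁻ a, ENNReal.ofReal (X 0 a) ∂μ)
        = ⨆ M : ℕ, ENNReal.ofReal (μ[fun a => min (X 0 a) (M:ℝ)]) := by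
      calc (∫⁻ a, ENNReal.ofReal (X 0 a) ∂μ)
          = ∫⁻ a, ⨆ M : ℕ, min (ENNReal.ofReal (X 0 a)) (M : ENNReal) ∂μ := by
            simp only [sup_min_nat]
        _ = ⨆ M : ℕ, ∫⁻ a, min (ENNReal.ofReal (X 0 a)) (M : ENNReal) ∂μ := by
            refine lintegral_iSup (fun M => ?_) (fun M N h a => ?_)
            · exact (ENNReal.measurable_ofReal.comp (hm 0)).min measurable_const
            · exact min_le_min le_rfl (by exact_mod_cast Nat.cast_le.mpr h)
        _ = ⨆ M : ℕ, ENNReal.ofReal (μ[fun a => min (X 0 a) (M:ℝ)]) := by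
            refine iSup_congr fun M => ?_
            rw [ofReal_integral_eq_lintegral_ofReal (hMint M)
              (Eventually.of_forall fun a => le_min (hnn 0 a) (Nat.cast_nonneg M))]
            refine lintegral_congr fun a => ?_
            rw [ofReal_min, ENNReal.ofReal_natCast]
    have hliminf : atTop.liminf
        (fun n : ℕ => (∑ i ∈ Finset.range n, ENNReal.ofReal (X i a)) / (n : ENNReal)) = ⊤ := by
      refine top_le_iff.mp ?_
      rw [← hI, hsup]
      exact iSup_le key
    have hlimsup : atTop.limsup
        (fun n : ℕ => (∑ i ∈ Finset.range n, ENNReal.ofReal (X i a)) / (n : ENNReal)) = ⊤ :=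
      top_le_iff.mp (hliminf ▸ liminf_le_limsup)
    rw [hI]
    exact tendsto_of_liminf_eq_limsup (hliminf.trans rfl) (hlimsup.trans rfl)
  · -- finite mean case
    have hint : Integrable (X 0) μ := by
      refine ⟨(hm 0).aestronglyMeasurable, ?_⟩
      rw [hasFiniteIntegral_iff_ofReal (Eventually.of_forall (hnn 0))]
      exact hI.lt_top
    have h := strong_law_ae_real X hint (fun i j hij => hindep i j hij) hident
    filter_upwards [h] with a ha
    have h2 : Tendsto (fun n : ℕ => ENNReal.ofReal ((∑ i ∈ Finset.range n, X i a) / n)) atTop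
        (nhds (ENNReal.ofReal (μ[X 0]))) := (ENNReal.continuous_ofReal.tendsto _).comp ha
    rw [ofReal_integral_eq_lintegral_ofReal hint (Eventually.of_forall (hnn 0))] at h2
    refine h2.congr' ?_
    filter_upwards [eventually_ge_atTop 1] with n hn
    rw [ENNReal.ofReal_div_of_pos (by exact_mod_cast hn), ENNReal.ofReal_natCast,
      ENNReal.ofReal_sum_of_nonneg (fun i _ => hnn i a)]

lemma integrable_of_bound {α : Type*} [MeasurableSpace α] (μ : Measure α) [IsProbabilityMeasure μ]
    (f : α → ℝ) (hf : Measurable f) (C : ℝ) (h : ∀ x, |f x| ≤ C) : Integrable f μ :=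
  Integrable.mono' (integrable_const C) hf.aestronglyMeasurable
    (Eventually.of_forall fun x => (Real.norm_eq_abs (f x)) ▸ h x)

lemma prob_eq_one_of_condexpKernel {Ω : Type*} (𝓔 : MeasurableSpace Ω) {mΩ : MeasurableSpace Ω}
    [StandardBorelSpace Ω] (h𝓔 : 𝓔 ≤ mΩ) (P : Measure Ω) [IsProbabilityMeasure P]
    {A : Set Ω} (hA : MeasurableSet A)
    (h : ∀ᵐ ω ∂P, condExpKernel P 𝓔 ω A = 1) : P A = 1 := by
  have h1 := condExpKernel_ae_eq_condExp (μ := P) h𝓔 hA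
  have hind : Integrable (A.indicator (fun _ => (1:ℝ))) P :=
    (integrable_const (1:ℝ)).indicator hA
  have h2 : ∫ ω, (condExpKernel P 𝓔 ω A).toReal ∂P = (P A).toReal := by
    rw [integral_congr_ae (f := fun ω => (condExpKernel P 𝓔 ω A).toReal) h1, integral_condExp h𝓔, integral_indicator_const _ hA]
    simp [Measure.real]
  have h3 : ∫ ω, (condExpKernel P 𝓔 ω A).toReal ∂P = 1 := by
    rw [integral_congr_ae (g := fun _ => (1:ℝ)) (by filter_upwards [h] with ω hω; rw [hω]; simp)]
    simp
  rw [← ENNReal.toReal_eq_one_iff, ← h2, h3]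

/-- An `𝓔`-measurable bounded function is a.e. constant on the fibers of the conditional
expectation kernel. -/
lemma concentration_condexpKernel {Ω : Type*} (𝓔 : MeasurableSpace Ω) {mΩ : MeasurableSpace Ω}
    [StandardBorelSpace Ω] (h𝓔 : 𝓔 ≤ mΩ) (P : Measure Ω) [IsProbabilityMeasure P]
    {f : Ω → ℝ} (hf : Measurable[𝓔] f) {C : ℝ} (hC : ∀ ω, |f ω| ≤ C) :
    ∀ᵐ ω ∂P, ∀ᵐ ω' ∂(condExpKernel P 𝓔 ω), f ω' = f ω := by
  have hfm : Measurable f := hf.mono h𝓔 le_rfl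
  have hfi : Integrable f P := integrable_of_bound P f hfm C hC
  have hf2m : Measurable (fun ω => f ω ^ 2) := hfm.pow_const 2
  have habs2 : ∀ ω, |f ω ^ 2| ≤ C ^ 2 := fun ω => by
    rw [abs_pow]
    exact pow_le_pow_left₀ (abs_nonneg _) (hC ω) 2
  have hf2i : Integrable (fun ω => f ω ^ 2) P := integrable_of_bound P _ hf2m (C^2) habs2
  have hf2E : Measurable[𝓔] (fun ω => f ω ^ 2) := hf.pow_const 2
  have e1 : (fun ω => ∫ x, f x ∂(condExpKernel P 𝓔 ω)) =ᵐ[P] f :=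
    (condExp_ae_eq_integral_condExpKernel h𝓔 hfi).symm.trans
      (by rw [condExp_of_stronglyMeasurable h𝓔 hf.stronglyMeasurable hfi])
  have e2 : (fun ω => ∫ x, f x ^ 2 ∂(condExpKernel P 𝓔 ω)) =ᵐ[P] fun ω => f ω ^ 2 :=
    (condExp_ae_eq_integral_condExpKernel h𝓔 hf2i).symm.trans
      (by rw [condExp_of_stronglyMeasurable h𝓔 hf2E.stronglyMeasurable hf2i])
  filter_upwards [e1, e2] with ω h1 h2
  have hκ : IsProbabilityMeasure (condExpKernel P 𝓔 ω) := IsMarkovKernel.isProbabilityMeasure ω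
  have hfiκ : Integrable f (condExpKernel P 𝓔 ω) := integrable_of_bound _ f hfm C hC
  have hf2iκ : Integrable (fun x => f x ^ 2) (condExpKernel P 𝓔 ω) :=
    integrable_of_bound _ _ hf2m (C^2) habs2
  have hAi : Integrable (fun x => f x ^ 2 - 2 * f ω * f x) (condExpKernel P 𝓔 ω) := by
    have := hf2iκ.sub (hfiκ.const_mul (2 * f ω))
    exact this
  have hgi : Integrable (fun x => (f x - f ω)^2) (condExpKernel P 𝓔 ω) := by
    have h' : Integrable (fun x => f x ^ 2 - 2 * f ω * f x + f ω ^ 2) (condExpKernel P 𝓔 ω) := by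
      have := hAi.add (integrable_const (f ω ^ 2))
      simpa using this
    refine h'.congr (Eventually.of_forall fun x => by ring)
  have hg0 : ∫ x, (f x - f ω)^2 ∂(condExpKernel P 𝓔 ω) = 0 := by
    calc ∫ x, (f x - f ω)^2 ∂(condExpKernel P 𝓔 ω)
        = ∫ x, (f x ^ 2 - 2 * f ω * f x) + f ω ^ 2 ∂(condExpKernel P 𝓔 ω) := by
          exact integral_congr_ae (Eventually.of_forall fun x => by ring)
      _ = (∫ x, f x ^ 2 - 2 * f ω * f x ∂(condExpKernel P 𝓔 ω)) + f ω ^ 2 := by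
          rw [integral_add hAi (integrable_const _), integral_const]
          simp
      _ = (∫ x, f x ^ 2 ∂(condExpKernel P 𝓔 ω))
          - (2 * f ω) * (∫ x, f x ∂(condExpKernel P 𝓔 ω)) + f ω ^ 2 := by
          rw [integral_sub hf2iκ (hfiκ.const_mul _), integral_const_mul]
      _ = 0 := by rw [h1, h2]; ring
  have := (integral_eq_zero_iff_of_nonneg (fun x => sq_nonneg _) hgi).mp hg0
  filter_upwards [this] with x hx
  have hx0 : f x - f ω = 0 := by
    have := pow_eq_zero_iff (n := 2) (by norm_num) |>.mp hx
    exact this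
  linarith

lemma real_inst_eq_generate : (inferInstance : MeasurableSpace ℝ)
    = MeasurableSpace.generateFrom (⋃ a : ℚ, {Set.Iic (a : ℝ)}) := by
  rw [BorelSpace.measurable_eq (α := ℝ), Real.borel_eq_generateFrom_Iic_rat]

/-- Under the conditional expectation kernel, the `Y i` are a.e. identically distributed. -/
lemma fiber_identDistrib {Ω : Type*} (𝓔 : MeasurableSpace Ω) {mΩ : MeasurableSpace Ω}
    [StandardBorelSpace Ω] (h𝓔 : 𝓔 ≤ mΩ) (P : Measure Ω) [IsProbabilityMeasure P]
    (Y : ℕ → Ω → ℝ) (hYm : ∀ i, Measurable (Y i))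
    (hcondid : ∀ i, ∀ s : Set ℝ, MeasurableSet s →
      (P[(Y i ⁻¹' s).indicator (fun _ => (1 : ℝ))|𝓔])
        =ᵐ[P] (P[(Y 0 ⁻¹' s).indicator (fun _ => (1 : ℝ))|𝓔])) :
    ∀ᵐ ω ∂P, ∀ i, Measure.map (Y i) (condExpKernel P 𝓔 ω)
      = Measure.map (Y 0) (condExpKernel P 𝓔 ω) := by
  have key : ∀ i (q : ℚ), ∀ᵐ ω ∂P,
      condExpKernel P 𝓔 ω (Y i ⁻¹' Set.Iic (q:ℝ)) = condExpKernel P 𝓔 ω (Y 0 ⁻¹' Set.Iic (q:ℝ)) := by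
    intro i q
    have h1 := condExpKernel_ae_eq_condExp (μ := P) h𝓔 ((hYm i) (measurableSet_Iic (a := (q:ℝ))))
    have h0 := condExpKernel_ae_eq_condExp (μ := P) h𝓔 ((hYm 0) (measurableSet_Iic (a := (q:ℝ))))
    have h2 := hcondid i (Set.Iic (q:ℝ)) measurableSet_Iic
    filter_upwards [h1, h0, h2] with ω e1 e0 e2
    have := e1.trans (e2.trans e0.symm)
    exact (ENNReal.toReal_eq_toReal_iff' (measure_ne_top _ _) (measure_ne_top _ _)).mp this
  have key' : ∀ᵐ ω ∂P, ∀ i (q : ℚ),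
      condExpKernel P 𝓔 ω (Y i ⁻¹' Set.Iic (q:ℝ)) = condExpKernel P 𝓔 ω (Y 0 ⁻¹' Set.Iic (q:ℝ)) := by
    rw [ae_all_iff]; intro i; rw [ae_all_iff]; exact key i
  filter_upwards [key'] with ω hω i
  have hκ : IsProbabilityMeasure (condExpKernel P 𝓔 ω) := IsMarkovKernel.isProbabilityMeasure ω
  have hpi : IsProbabilityMeasure (Measure.map (Y i) (condExpKernel P 𝓔 ω)) :=
    Measure.isProbabilityMeasure_map (hYm i).aemeasurable
  have hp0 : IsProbabilityMeasure (Measure.map (Y 0) (condExpKernel P 𝓔 ω)) :=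
    Measure.isProbabilityMeasure_map (hYm 0).aemeasurable
  refine ext_of_generate_finite _ real_inst_eq_generate Real.isPiSystem_Iic_rat ?_ ?_
  · rintro s hs
    simp only [Set.mem_iUnion, Set.mem_singleton_iff] at hs
    obtain ⟨q, rfl⟩ := hs
    rw [Measure.map_apply (hYm i) measurableSet_Iic, Measure.map_apply (hYm 0) measurableSet_Iic]
    exact hω i q
  · rw [measure_univ, measure_univ]

/-- Under the conditional expectation kernel, the `Y i` are a.e. pairwise independent. -/
lemma fiber_indep {Ω : Type*} (𝓔 : MeasurableSpace Ω) {mΩ : MeasurableSpace Ω}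
    [StandardBorelSpace Ω] (h𝓔 : 𝓔 ≤ mΩ) (P : Measure Ω) [IsProbabilityMeasure P]
    (Y : ℕ → Ω → ℝ) (hYm : ∀ i, Measurable (Y i))
    (hcondindep : iCondIndepFun 𝓔 h𝓔 Y P) :
    ∀ᵐ ω ∂P, ∀ i j, i ≠ j → IndepFun (Y i) (Y j) (condExpKernel P 𝓔 ω) := by
  have hker : Kernel.iIndepFun Y (condExpKernel P 𝓔) (P.trim h𝓔) :=
    hcondindep
  have key : ∀ (i j : ℕ) (q r : ℚ), ∀ᵐ ω ∂P, i ≠ j →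
      condExpKernel P 𝓔 ω (Y i ⁻¹' Set.Iic (q:ℝ) ∩ Y j ⁻¹' Set.Iic (r:ℝ))
        = condExpKernel P 𝓔 ω (Y i ⁻¹' Set.Iic (q:ℝ))
          * condExpKernel P 𝓔 ω (Y j ⁻¹' Set.Iic (r:ℝ)) := by
    intro i j q r
    rcases eq_or_ne i j with rfl | hij
    · exact Eventually.of_forall fun ω h => absurd rfl h
    · have h1 := (Kernel.indepFun_iff_measure_inter_preimage_eq_mul.mp (hker.indepFun hij))
        (Set.Iic (q:ℝ)) (Set.Iic (r:ℝ)) measurableSet_Iic measurableSet_Iic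
      exact (ae_of_ae_trim h𝓔 h1).mono fun ω h _ => h
  have key' : ∀ᵐ ω ∂P, ∀ (i j : ℕ) (q r : ℚ), i ≠ j →
      condExpKernel P 𝓔 ω (Y i ⁻¹' Set.Iic (q:ℝ) ∩ Y j ⁻¹' Set.Iic (r:ℝ))
        = condExpKernel P 𝓔 ω (Y i ⁻¹' Set.Iic (q:ℝ))
          * condExpKernel P 𝓔 ω (Y j ⁻¹' Set.Iic (r:ℝ)) := by
    rw [ae_all_iff]; intro i; rw [ae_all_iff]; intro j; rw [ae_all_iff]; intro q
    rw [ae_all_iff]; intro r; exact key i j q r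
  filter_upwards [key'] with ω hω i j hij
  have hκ : IsProbabilityMeasure (condExpKernel P 𝓔 ω) := IsMarkovKernel.isProbabilityMeasure ω
  have h := IndepSets.indep (μ := condExpKernel P 𝓔 ω)
    (m1 := MeasurableSpace.comap (Y i) inferInstance)
    (m2 := MeasurableSpace.comap (Y j) inferInstance)
    ((hYm i).comap_le) ((hYm j).comap_le)
    (Real.isPiSystem_Iic_rat.comap (Y i)) (Real.isPiSystem_Iic_rat.comap (Y j))
    (by rw [real_inst_eq_generate, MeasurableSpace.comap_generateFrom]
        exact congrArg _ (by ext s; simp [Set.mem_image, eq_comm]))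
    (by rw [real_inst_eq_generate, MeasurableSpace.comap_generateFrom]
        exact congrArg _ (by ext s; simp [Set.mem_image, eq_comm]))
    ?_
  · exact h
  · rintro t1 t2 ⟨s1, hs1, rfl⟩ ⟨s2, hs2, rfl⟩
    simp only [Set.mem_iUnion, Set.mem_singleton_iff] at hs1 hs2
    obtain ⟨q, rfl⟩ := hs1
    obtain ⟨r, rfl⟩ := hs2
    exact Eventually.of_forall fun _ => hω i j q r hij

theorem stmt8 {Ω : Type*} (𝓔 : MeasurableSpace Ω) {mΩ : MeasurableSpace Ω}
    [StandardBorelSpace Ω] (h𝓔 : 𝓔 ≤ mΩ)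
    (P : Measure Ω) [IsProbabilityMeasure P]
    (Y : ℕ → Ω → ℝ) (hYm : ∀ i, Measurable (Y i))
    -- exchangeability: the law is invariant under finite permutations of indices
    (hexch : ∀ σ : Equiv.Perm ℕ, {i | σ i ≠ i}.Finite →
      P.map (fun ω i => Y (σ i) ω) = P.map (fun ω i => Y i ω))
    -- conditionally i.i.d. given 𝓔:
    (hcondindep : iCondIndepFun 𝓔 h𝓔 Y P)
    (hcondid : ∀ i, ∀ s : Set ℝ, MeasurableSet s →
      (P[(Y i ⁻¹' s).indicator (fun _ => (1 : ℝ))|𝓔])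
        =ᵐ[P] (P[(Y 0 ⁻¹' s).indicator (fun _ => (1 : ℝ))|𝓔])) :
    ∃ L : Ω → ENNReal,
      (∀ᵐ ω ∂P, Tendsto
          (fun n => (∑ i ∈ Finset.range n, ENNReal.ofReal (Y i ω ^ 2)) / n)
          atTop (nhds (L ω))) ∧
      ∀ᵐ ω ∂P, (L ω < ⊤ ↔
        (∫⁻ ω', ENNReal.ofReal (Y 0 ω' ^ 2) ∂(condExpKernel P 𝓔 ω)) < ⊤) := by
  set κ := condExpKernel P 𝓔 with hκdef
  set S : ℕ → Ω → ENNReal :=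
    fun n ω => (∑ i ∈ Finset.range n, ENNReal.ofReal (Y i ω ^ 2)) / n with hSdef
  have hSm : ∀ n, Measurable (S n) := by
    intro n
    exact (Finset.measurable_sum _ fun i _ =>
      (ENNReal.measurable_ofReal.comp ((hYm i).pow_const 2))).div measurable_const
  set L : Ω → ENNReal := fun ω => atTop.limsup (fun n => S n ω) with hLdef
  have hLm : Measurable L := Measurable.limsup hSm
  set I : Ω → ENNReal := fun ω => ∫⁻ ω', ENNReal.ofReal (Y 0 ω' ^ 2) ∂(κ ω) with hIdef
  have hIE : Measurable[𝓔] I :=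
    Measurable.lintegral_kernel (κ := κ) (ENNReal.measurable_ofReal.comp ((hYm 0).pow_const 2))
  have hIm : Measurable I := hIE.mono h𝓔 le_rfl
  -- fiberwise strong law of large numbers
  have hfib : ∀ᵐ ω ∂P, ∀ᵐ ω' ∂(κ ω), Tendsto (fun n => S n ω') atTop (nhds (I ω)) := by
    filter_upwards [fiber_identDistrib 𝓔 h𝓔 P Y hYm hcondid,
      fiber_indep 𝓔 h𝓔 P Y hYm hcondindep] with ω hid hind
    haveI : IsProbabilityMeasure (κ ω) := IsMarkovKernel.isProbabilityMeasure ω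
    exact slln_ennreal (κ ω) (fun i ω' => Y i ω' ^ 2)
      (fun i => (hYm i).pow_const 2) (fun i a => sq_nonneg _)
      (fun i j hij => (hind i j hij).comp (measurable_id.pow_const 2) (measurable_id.pow_const 2))
      (fun i => IdentDistrib.comp
        ⟨(hYm i).aemeasurable, (hYm 0).aemeasurable, hid i⟩ (measurable_id.pow_const 2))
  -- concentration of `I` on fibers
  set J : ℕ → Ω → ENNReal :=
    fun M ω => ∫⁻ ω', min (ENNReal.ofReal (Y 0 ω' ^ 2)) (M : ENNReal) ∂(κ ω) with hJdef
  have hJle : ∀ M ω, J M ω ≤ (M : ENNReal) := by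
    intro M ω
    haveI : IsProbabilityMeasure (κ ω) := IsMarkovKernel.isProbabilityMeasure ω
    calc J M ω ≤ ∫⁻ _, (M : ENNReal) ∂(κ ω) := lintegral_mono fun _ => min_le_right _ _
      _ = M := by simp
  have hJE : ∀ M : ℕ, Measurable[𝓔] (fun ω => (J M ω).toReal) := fun M =>
    (Measurable.lintegral_kernel (κ := κ)
      ((ENNReal.measurable_ofReal.comp ((hYm 0).pow_const 2)).min measurable_const)).ennreal_toReal
  have hJbd : ∀ M : ℕ, ∀ ω, |(J M ω).toReal| ≤ (M : ℝ) := by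
    intro M ω
    rw [abs_of_nonneg ENNReal.toReal_nonneg]
    refine ENNReal.toReal_le_of_le_ofReal (Nat.cast_nonneg M) ?_
    rw [ENNReal.ofReal_natCast]
    exact hJle M ω
  have hconc : ∀ᵐ ω ∂P, ∀ᵐ ω' ∂(κ ω), ∀ M : ℕ, J M ω' = J M ω := by
    have h1 : ∀ᵐ ω ∂P, ∀ M : ℕ, ∀ᵐ ω' ∂(κ ω), (J M ω').toReal = (J M ω).toReal := by
      rw [ae_all_iff]
      exact fun M => concentration_condexpKernel 𝓔 h𝓔 P (hJE M) (hJbd M)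
    filter_upwards [h1] with ω hω
    rw [← ae_all_iff] at hω
    filter_upwards [hω] with ω' hω' M
    have hfin : J M ω' ≠ ⊤ := ((hJle M ω').trans_lt (by simp)).ne
    have hfin' : J M ω ≠ ⊤ := ((hJle M ω).trans_lt (by simp)).ne
    exact (ENNReal.toReal_eq_toReal_iff' hfin hfin').mp (hω' M)
  have hIJ : ∀ ω, I ω = ⨆ M : ℕ, J M ω := by
    intro ω
    refine Eq.symm ?_
    calc ⨆ M : ℕ, J M ω
        = ∫⁻ ω', ⨆ M : ℕ, min (ENNReal.ofReal (Y 0 ω' ^ 2)) (M : ENNReal) ∂(κ ω) := by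
          refine (lintegral_iSup
            (f := fun M ω' => min (ENNReal.ofReal (Y 0 ω' ^ 2)) (M : ENNReal)) (fun M =>
              (ENNReal.measurable_ofReal.comp ((hYm 0).pow_const 2)).min measurable_const)
            (fun M N h a => min_le_min le_rfl (by exact_mod_cast Nat.cast_le.mpr h))).symm
      _ = I ω := lintegral_congr fun ω' => sup_min_nat _
  have hIconc : ∀ᵐ ω ∂P, ∀ᵐ ω' ∂(κ ω), I ω' = I ω := by
    filter_upwards [hconc] with ω hω
    filter_upwards [hω] with ω' hω'
    rw [hIJ, hIJ]
    exact iSup_congr hω'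
  -- the event where the limit exists
  set A : Set Ω :=
    {ω' | atTop.liminf (fun n => S n ω') = atTop.limsup (fun n => S n ω')} with hAdef
  have hAmeas : MeasurableSet A :=
    (Measurable.liminf hSm).stronglyMeasurable.measurableSet_eq_fun
      (Measurable.limsup hSm).stronglyMeasurable
  have hA1 : ∀ᵐ ω ∂P, κ ω A = 1 := by
    filter_upwards [hfib] with ω hω
    haveI : IsProbabilityMeasure (κ ω) := IsMarkovKernel.isProbabilityMeasure ω
    have hmem : ∀ᵐ ω' ∂(κ ω), ω' ∈ A := by
      filter_upwards [hω] with ω' hω'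
      exact (hω'.liminf_eq).trans (hω'.limsup_eq).symm
    rw [(ae_mem_iff_measure_eq hAmeas.nullMeasurableSet).mp hmem, measure_univ]
  have hPA : P A = 1 := prob_eq_one_of_condexpKernel 𝓔 h𝓔 P hAmeas hA1
  have hmemA : ∀ᵐ ω ∂P, ω ∈ A :=
    (ae_mem_iff_measure_eq hAmeas.nullMeasurableSet).mpr (by rw [hPA, measure_univ])
  -- L = I almost everywhere
  have hDmeas : MeasurableSet {ω' | L ω' = I ω'} :=
    hLm.stronglyMeasurable.measurableSet_eq_fun hIm.stronglyMeasurable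
  have hD1 : ∀ᵐ ω ∂P, κ ω {ω' | L ω' = I ω'} = 1 := by
    filter_upwards [hfib, hIconc] with ω h1 h2
    haveI : IsProbabilityMeasure (κ ω) := IsMarkovKernel.isProbabilityMeasure ω
    have hmem : ∀ᵐ ω' ∂(κ ω), ω' ∈ {ω' | L ω' = I ω'} := by
      filter_upwards [h1, h2] with ω' ht hI'
      show L ω' = I ω'
      rw [hLdef]
      simp only
      rw [ht.limsup_eq, hI']
    rw [(ae_mem_iff_measure_eq hDmeas.nullMeasurableSet).mp hmem, measure_univ]
  have hPD : P {ω' | L ω' = I ω'} = 1 := prob_eq_one_of_condexpKernel 𝓔 h𝓔 P hDmeas hD1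
  have hLI : ∀ᵐ ω ∂P, L ω = I ω := by
    have := (ae_mem_iff_measure_eq (μ := P) hDmeas.nullMeasurableSet).mpr
      (by rw [hPD, measure_univ])
    filter_upwards [this] with ω h
    exact h
  refine ⟨L, ?_, ?_⟩
  · filter_upwards [hmemA] with ω hω
    exact tendsto_of_liminf_eq_limsup hω rfl
  · filter_upwards [hLI] with ω h
    show L ω < ⊤ ↔ I ω < ⊤
    rw [h]
end
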